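/- Let P be a set of n points in the plane with at most ℓ points on any line, where ℓ ≤ C√n for a constant C. If for each k the number of lines containing at least k points of P is at most B(n²/k³ + n/k) (Szemerédi–Trotter), then the number of collinear triples of points of P is O(n² log ℓ). -/

import Mathlib

open scoped Classical

/-- `L` is a line in `ℝ²`: a nonempty affine subspace with one-dimensional direction. -/
def IsLine (L : AffineSubspace ℝ (Fin 2 → ℝ)) : Prop :=
  L ≠ ⊥ ∧ Module.finrank ℝ L.direction = 1

lemma line_eq_span {L : AffineSubspace ℝ (Fin 2 → ℝ)} (hL : IsLine L)
    {p q : Fin 2 → ℝ} (hp : p ∈ L) (hq : q ∈ L) (hpq : p ≠ q) :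
    L = affineSpan ℝ {p, q} := by
  have hle : affineSpan ℝ {p, q} ≤ L := by
    rw [affineSpan_le]
    intro x hx
    rcases hx with rfl | rfl
    · exact hp
    · exact hq
  have hbot : affineSpan ℝ ({p, q} : Set (Fin 2 → ℝ)) ≠ ⊥ := by
    simp only [ne_eq, affineSpan_eq_bot]; exact Set.insert_nonempty _ _ |>.ne_empty
  have hrank : Module.finrank ℝ (affineSpan ℝ ({p, q} : Set (Fin 2 → ℝ))).direction = 1 := by
    rw [direction_affineSpan, vectorSpan_pair]
    exact finrank_span_singleton (sub_ne_zero.mpr hpq)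
  have hdir : (affineSpan ℝ ({p, q} : Set (Fin 2 → ℝ))).direction = L.direction := by
    apply Submodule.eq_of_le_of_finrank_le (AffineSubspace.direction_le hle)
    rw [hL.2, hrank]
  exact ((AffineSubspace.eq_iff_direction_eq_of_mem
    (mem_affineSpan ℝ (by simp)) hp).mpr hdir).symm

lemma harmonic_le_log : ∀ m : ℕ, 1 ≤ m → ∑ j ∈ Finset.Icc 2 m, (1 / (j:ℝ)) ≤ Real.log m := by
  intro m
  induction m with
  | zero => intro h; omega
  | succ n ih =>
    intro _
    rcases Nat.lt_or_ge n 1 with hn | hn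
    · interval_cases n
      simp
    · rw [Finset.sum_Icc_succ_top (by omega : 2 ≤ n + 1)]
      have h1 : Real.log (n / (n+1) : ℝ) ≤ (n / (n+1) : ℝ) - 1 :=
        Real.log_le_sub_one_of_pos (by positivity)
      have hn0 : (0:ℝ) < n := by exact_mod_cast hn
      have h2 : Real.log (n / (n+1) : ℝ) = Real.log n - Real.log (n+1) :=
        Real.log_div (ne_of_gt hn0) (by positivity)
      have h3 : (n / (n+1) : ℝ) - 1 = -(1 / (n+1)) := by field_simp; ring
      have := ih hn
      push_cast
      rw [h2, h3] at h1
      linarith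

lemma lines_finite (P : Finset (Fin 2 → ℝ)) (k : ℕ) (hk : 2 ≤ k) :
    {L : AffineSubspace ℝ (Fin 2 → ℝ) | IsLine L ∧ k ≤ (P.filter (· ∈ L)).card}.Finite := by
  apply Set.Finite.subset (Set.Finite.image
    (fun pq : (Fin 2 → ℝ) × (Fin 2 → ℝ) => affineSpan ℝ {pq.1, pq.2})
    (P.finite_toSet.prod P.finite_toSet))
  rintro L ⟨hL, hcard⟩
  have h1 : 1 < (P.filter (· ∈ L)).card := by omega
  obtain ⟨p, hp, q, hq, hpq⟩ := Finset.one_lt_card.mp h1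
  simp only [Finset.mem_filter] at hp hq
  exact ⟨(p, q), ⟨hp.1, hq.1⟩, (line_eq_span hL hp.2 hq.2 hpq).symm⟩

/-- Szemerédi–Trotter implies the collinear-triple bound: if `P` has `n` points, at most
`ℓ ≤ C√n` on any line, and for each `k ≥ 2` the number of lines with at least `k` points
is at most `B(n²/k³ + n/k)`, then the number of collinear triples is `O(n² log ℓ)`. -/
theorem stmt5 (B C : ℝ) (hB : 0 < B) (hC : 0 < C) :
    ∃ K : ℝ, 0 < K ∧ ∀ (P : Finset (Fin 2 → ℝ)) (ℓ : ℕ), 3 ≤ ℓ →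
      (ℓ : ℝ) ≤ C * Real.sqrt P.card →
      (∀ L : AffineSubspace ℝ (Fin 2 → ℝ), IsLine L → (P.filter (· ∈ L)).card ≤ ℓ) →
      (∀ k : ℕ, 2 ≤ k →
        ({L : AffineSubspace ℝ (Fin 2 → ℝ) |
            IsLine L ∧ k ≤ (P.filter (· ∈ L)).card}.ncard : ℝ)
          ≤ B * ((P.card : ℝ) ^ 2 / (k : ℝ) ^ 3 + (P.card : ℝ) / k)) →
      (((P.powersetCard 3).filter
          (fun T => ∃ L : AffineSubspace ℝ (Fin 2 → ℝ), IsLine L ∧ ∀ p ∈ T, p ∈ L)).card : ℝ)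
        ≤ K * (P.card : ℝ) ^ 2 * Real.log ℓ := by
  refine ⟨B * (1 + C ^ 2), by positivity, ?_⟩
  intro P ℓ hℓ3 hℓC hmax hST
  set n := P.card with hn
  set 𝒯 := (P.powersetCard 3).filter
      (fun T => ∃ L : AffineSubspace ℝ (Fin 2 → ℝ), IsLine L ∧ ∀ p ∈ T, p ∈ L) with h𝒯
  set f : Finset (Fin 2 → ℝ) → AffineSubspace ℝ (Fin 2 → ℝ) :=
      fun T => affineSpan ℝ (T : Set (Fin 2 → ℝ)) with hf
  set m : AffineSubspace ℝ (Fin 2 → ℝ) → ℕ := fun L => (P.filter (· ∈ L)).card with hm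
  -- the span of a triple is its witness line
  have hTfact : ∀ T ∈ 𝒯, ∀ L : AffineSubspace ℝ (Fin 2 → ℝ),
      IsLine L → (∀ p ∈ T, p ∈ L) → f T = L := by
    intro T hT L hL hTL
    rw [h𝒯, Finset.mem_filter, Finset.mem_powersetCard] at hT
    obtain ⟨⟨hTP, hT3⟩, -⟩ := hT
    obtain ⟨p, hp, q, hq, hpq⟩ := Finset.one_lt_card.mp (by omega : 1 < T.card)
    have hLspan : L = affineSpan ℝ {p, q} := line_eq_span hL (hTL p hp) (hTL q hq) hpq
    apply le_antisymm
    · rw [hf, affineSpan_le]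
      intro x hx
      exact hTL x hx
    · rw [hLspan]
      apply affineSpan_mono
      intro x hx
      rcases hx with rfl | rfl
      · exact hp
      · exact hq
  have hTline : ∀ T ∈ 𝒯, IsLine (f T) ∧ T ⊆ P.filter (· ∈ f T) := by
    intro T hT
    have hT' := hT
    rw [h𝒯, Finset.mem_filter, Finset.mem_powersetCard] at hT'
    obtain ⟨⟨hTP, hT3⟩, L, hL, hTL⟩ := hT'
    have := hTfact T hT L hL hTL
    refine ⟨this ▸ hL, ?_⟩
    intro x hx
    rw [Finset.mem_filter]
    exact ⟨hTP hx, subset_affineSpan ℝ _ hx⟩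
  set Lines := 𝒯.image f with hLines
  have hLfact : ∀ L ∈ Lines, IsLine L ∧ 3 ≤ m L ∧ m L ≤ ℓ := by
    intro L hL
    obtain ⟨T, hT, rfl⟩ := Finset.mem_image.mp hL
    obtain ⟨hline, hsub⟩ := hTline T hT
    have hT3 : T.card = 3 := by
      rw [h𝒯, Finset.mem_filter, Finset.mem_powersetCard] at hT
      exact hT.1.2
    refine ⟨hline, ?_, hmax _ hline⟩
    calc 3 = T.card := hT3.symm
    _ ≤ m (f T) := Finset.card_le_card hsub
  -- nat-level counting
  have hcount : 𝒯.card ≤ ∑ j ∈ Finset.Icc 2 (ℓ - 1),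
      (Lines.filter fun L => j + 1 ≤ m L).card * j.choose 2 := by
    have h1 : 𝒯.card = ∑ L ∈ Lines, (𝒯.filter fun T => f T = L).card :=
      Finset.card_eq_sum_card_fiberwise (fun T hT => Finset.mem_image_of_mem f hT)
    have h2 : ∀ L ∈ Lines, (𝒯.filter fun T => f T = L).card ≤ (m L).choose 3 := by
      intro L hL
      rw [← Finset.card_powersetCard]
      apply Finset.card_le_card
      intro T hT
      rw [Finset.mem_filter] at hT
      obtain ⟨hT, hfT⟩ := hT
      rw [Finset.mem_powersetCard]
      have hT3 : T.card = 3 := by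
        rw [h𝒯, Finset.mem_filter, Finset.mem_powersetCard] at hT
        exact hT.1.2
      exact ⟨hfT ▸ (hTline T hT).2, hT3⟩
    have h3 : ∀ L ∈ Lines, (m L).choose 3 =
        ∑ j ∈ Finset.Icc 2 (ℓ - 1), if j + 1 ≤ m L then j.choose 2 else 0 := by
      intro L hL
      obtain ⟨-, h3m, hmℓ⟩ := hLfact L hL
      rw [← Finset.sum_filter]
      have : Finset.Icc 2 (m L - 1) = (Finset.Icc 2 (ℓ - 1)).filter (fun j => j + 1 ≤ m L) := by
        ext j
        simp only [Finset.mem_filter, Finset.mem_Icc]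
        omega
      rw [← this]
      have := Nat.sum_Icc_choose (m L - 1) 2
      rw [this]
      congr 1
      omega
    calc 𝒯.card = ∑ L ∈ Lines, (𝒯.filter fun T => f T = L).card := h1
    _ ≤ ∑ L ∈ Lines, (m L).choose 3 := Finset.sum_le_sum h2
    _ = ∑ L ∈ Lines, ∑ j ∈ Finset.Icc 2 (ℓ - 1), (if j + 1 ≤ m L then j.choose 2 else 0) :=
        Finset.sum_congr rfl h3
    _ = ∑ j ∈ Finset.Icc 2 (ℓ - 1), ∑ L ∈ Lines, (if j + 1 ≤ m L then j.choose 2 else 0) :=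
        Finset.sum_comm
    _ = ∑ j ∈ Finset.Icc 2 (ℓ - 1), (Lines.filter fun L => j + 1 ≤ m L).card * j.choose 2 := by
        refine Finset.sum_congr rfl fun j _ => ?_
        rw [← Finset.sum_filter, Finset.sum_const, smul_eq_mul]
  -- real-level estimates
  have hn0 : (0:ℝ) ≤ (n:ℝ) := Nat.cast_nonneg n
  have hℓ2 : ((ℓ:ℝ))^2 ≤ C^2 * n := by
    have h := mul_self_le_mul_self (by positivity : (0:ℝ) ≤ (ℓ:ℝ)) hℓC
    calc ((ℓ:ℝ))^2 = (ℓ:ℝ) * (ℓ:ℝ) := sq (ℓ:ℝ) ▸ rfl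
    _ ≤ (C * Real.sqrt n) * (C * Real.sqrt n) := h
    _ = C^2 * (Real.sqrt n * Real.sqrt n) := by ring
    _ = C^2 * n := by rw [Real.mul_self_sqrt hn0]
  have hlog1 : 1 ≤ Real.log ℓ := by
    have h3 : (3:ℝ) ≤ (ℓ:ℝ) := by exact_mod_cast hℓ3
    have : (1:ℝ) ≤ Real.log 3 := by
      rw [Real.le_log_iff_exp_le (by norm_num)]
      calc Real.exp 1 ≤ 2.7182818286 := Real.exp_one_lt_d9.le
      _ ≤ 3 := by norm_num
    exact this.trans (Real.log_le_log (by norm_num) h3)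
  have hNj : ∀ j ∈ Finset.Icc 2 (ℓ - 1),
      ((Lines.filter fun L => j + 1 ≤ m L).card : ℝ)
        ≤ B * ((n:ℝ)^2 / ((j:ℝ)+1)^3 + (n:ℝ) / ((j:ℝ)+1)) := by
    intro j hj
    rw [Finset.mem_Icc] at hj
    have hsub : ↑(Lines.filter fun L => j + 1 ≤ m L) ⊆
        {L : AffineSubspace ℝ (Fin 2 → ℝ) | IsLine L ∧ j + 1 ≤ (P.filter (· ∈ L)).card} := by
      intro L hL
      rw [Finset.mem_coe, Finset.mem_filter] at hL
      exact ⟨(hLfact L hL.1).1, hL.2⟩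
    have hfin := lines_finite P (j+1) (by omega)
    have hcard : ((Lines.filter fun L => j + 1 ≤ m L).card : ℝ)
        ≤ ({L : AffineSubspace ℝ (Fin 2 → ℝ) |
            IsLine L ∧ j + 1 ≤ (P.filter (· ∈ L)).card}.ncard : ℝ) := by
      rw [← Set.ncard_coe_finset]
      exact_mod_cast Set.ncard_le_ncard hsub hfin
    have := hST (j+1) (by omega)
    push_cast at this ⊢
    linarith
  have hterm : ∀ j ∈ Finset.Icc 2 (ℓ - 1),
      ((Lines.filter fun L => j + 1 ≤ m L).card : ℝ) * (j.choose 2 : ℝ)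
        ≤ B * ((n:ℝ)^2 * (1/(j:ℝ)) + (n:ℝ) * (j:ℝ)) := by
    intro j hj
    have hj2 : 2 ≤ j := (Finset.mem_Icc.mp hj).1
    have hjR : (2:ℝ) ≤ (j:ℝ) := by exact_mod_cast hj2
    have hCj : (j.choose 2 : ℝ) ≤ (j:ℝ)^2 := by
      have : j.choose 2 ≤ j^2 := by
        rw [Nat.choose_two_right]
        calc j * (j-1) / 2 ≤ j * (j-1) := Nat.div_le_self _ _
        _ ≤ j * j := Nat.mul_le_mul_left j (by omega)
        _ = j^2 := (sq j).symm
      exact_mod_cast this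
    have hpos : (0:ℝ) ≤ B * ((n:ℝ)^2 / ((j:ℝ)+1)^3 + (n:ℝ) / ((j:ℝ)+1)) := by positivity
    have h1 := mul_le_mul (hNj j hj) hCj (by positivity) hpos
    refine h1.trans ?_
    have e1 : (j:ℝ)^2/((j:ℝ)+1)^3 ≤ 1/(j:ℝ) := by
      rw [div_le_div_iff₀ (by positivity) (by positivity)]
      nlinarith
    have e2 : (j:ℝ)^2/((j:ℝ)+1) ≤ (j:ℝ) := by
      rw [div_le_iff₀ (by positivity)]
      nlinarith
    have expand : B * ((n:ℝ)^2 / ((j:ℝ)+1)^3 + (n:ℝ) / ((j:ℝ)+1)) * (j:ℝ)^2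
        = B * ((n:ℝ)^2 * ((j:ℝ)^2/((j:ℝ)+1)^3) + (n:ℝ) * ((j:ℝ)^2/((j:ℝ)+1))) := by
      ring
    rw [expand]
    refine mul_le_mul_of_nonneg_left ?_ hB.le
    exact add_le_add (mul_le_mul_of_nonneg_left e1 (sq_nonneg _))
      (mul_le_mul_of_nonneg_left e2 hn0)
  have hsum1 : ∑ j ∈ Finset.Icc 2 (ℓ - 1), (1/(j:ℝ)) ≤ Real.log ℓ := by
    refine (harmonic_le_log (ℓ-1) (by omega)).trans (Real.log_le_log ?_ ?_)
    · exact_mod_cast (by omega : 0 < ℓ - 1)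
    · exact_mod_cast Nat.sub_le ℓ 1
  have hsum2 : ∑ j ∈ Finset.Icc 2 (ℓ - 1), (j:ℝ) ≤ (ℓ:ℝ)^2 := by
    have h := Finset.sum_le_card_nsmul (Finset.Icc 2 (ℓ-1)) (fun j => (j:ℝ)) (ℓ:ℝ)
      (fun j hj => by show ((j:ℝ)) ≤ (ℓ:ℝ); exact_mod_cast le_trans (Finset.mem_Icc.mp hj).2 (Nat.sub_le ℓ 1))
    refine h.trans ?_
    rw [Nat.card_Icc, nsmul_eq_mul]
    have h1 : ((ℓ - 1 + 1 - 2 : ℕ):ℝ) ≤ (ℓ:ℝ) := by exact_mod_cast (by omega : ℓ - 1 + 1 - 2 ≤ ℓ)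
    have h2 : (0:ℝ) ≤ (ℓ:ℝ) := Nat.cast_nonneg ℓ
    rw [pow_two]
    exact mul_le_mul_of_nonneg_right h1 h2
  have key : (𝒯.card : ℝ) ≤ ∑ j ∈ Finset.Icc 2 (ℓ - 1),
      ((Lines.filter fun L => j + 1 ≤ m L).card : ℝ) * (j.choose 2 : ℝ) := by
    exact_mod_cast hcount
  calc (𝒯.card : ℝ)
      ≤ ∑ j ∈ Finset.Icc 2 (ℓ - 1),
        ((Lines.filter fun L => j + 1 ≤ m L).card : ℝ) * (j.choose 2 : ℝ) := key
    _ ≤ ∑ j ∈ Finset.Icc 2 (ℓ - 1), B * ((n:ℝ)^2 * (1/(j:ℝ)) + (n:ℝ) * (j:ℝ)) :=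
        Finset.sum_le_sum hterm
    _ = B * (n:ℝ)^2 * (∑ j ∈ Finset.Icc 2 (ℓ - 1), (1/(j:ℝ)))
        + B * (n:ℝ) * (∑ j ∈ Finset.Icc 2 (ℓ - 1), (j:ℝ)) := by
        rw [Finset.mul_sum, Finset.mul_sum, ← Finset.sum_add_distrib]
        exact Finset.sum_congr rfl fun j _ => by ring
    _ ≤ B * (n:ℝ)^2 * Real.log ℓ + B * (n:ℝ) * (ℓ:ℝ)^2 :=
        add_le_add (mul_le_mul_of_nonneg_left hsum1 (mul_nonneg hB.le (sq_nonneg _)))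
          (mul_le_mul_of_nonneg_left hsum2 (mul_nonneg hB.le hn0))
    _ ≤ B * (1 + C ^ 2) * (n:ℝ)^2 * Real.log ℓ := by
        have h1 : (n:ℝ) * ((ℓ:ℝ))^2 ≤ (n:ℝ) * (C^2 * (n:ℝ)) :=
          mul_le_mul_of_nonneg_left hℓ2 hn0
        have h2 : B * ((n:ℝ) * ((ℓ:ℝ))^2) ≤ B * ((n:ℝ) * (C^2 * (n:ℝ))) :=
          mul_le_mul_of_nonneg_left h1 hB.le
        have h3 : B * C^2 * (n:ℝ)^2 * 1 ≤ B * C^2 * (n:ℝ)^2 * Real.log ℓ :=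
          mul_le_mul_of_nonneg_left hlog1
            (mul_nonneg (mul_nonneg hB.le (sq_nonneg C)) (sq_nonneg _))
        linarith only [h2, h3]
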